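/- Let $A$ be a $k \times k$ matrix over a field $\F$ such that every factorization $A = PQ$ (with $P$ a $k \times r$ matrix and $Q$ an $r \times k$ matrix, for any $r$) satisfies $\mathrm{spars}(P) + \mathrm{spars}(Q) \geq s$. Let $B = I_m \otimes A$ be the $mk \times mk$ block-diagonal Kronecker product with the $m \times m$ identity matrix. Then every factorization $B = PQ$ satisfies $\mathrm{spars}(P) + \mathrm{spars}(Q) \geq m \cdot s$. -/

import Mathlib

open Matrix

noncomputable def spars {k l F : Type*} [Fintype k] [Fintype l] [Zero F]
    (M : Matrix k l F) : ℕ := Set.ncard {p : k × l | M p.1 p.2 ≠ 0}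

lemma spars_eq_sum {k l F : Type*} [Fintype k] [Fintype l] [Zero F]
    [DecidableEq F] (M : Matrix k l F) :
    spars M = ∑ x : k, ∑ y : l, if M x y ≠ 0 then 1 else 0 := by
  classical
  have : {p : k × l | M p.1 p.2 ≠ 0} =
      ↑(Finset.univ.filter (fun p : k × l => M p.1 p.2 ≠ 0)) := by
    ext p; simp
  rw [spars, this, Set.ncard_coe_finset, Finset.card_filter, Fintype.sum_prod_type]

theorem stmt0 {F : Type*} [Field F] (k m s : ℕ) (A : Matrix (Fin k) (Fin k) F)
    (hA : ∀ (r : ℕ) (P : Matrix (Fin k) (Fin r) F) (Q : Matrix (Fin r) (Fin k) F),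
      A = P * Q → s ≤ spars P + spars Q)
    (r : ℕ) (P : Matrix (Fin m × Fin k) (Fin r) F) (Q : Matrix (Fin r) (Fin m × Fin k) F)
    (hB : Matrix.kroneckerMap (· * ·) (1 : Matrix (Fin m) (Fin m) F) A = P * Q) :
    m * s ≤ spars P + spars Q := by
  classical
  set Pi : Fin m → Matrix (Fin k) (Fin r) F := fun i => fun x t => P (i, x) t with hPi
  set Qi : Fin m → Matrix (Fin r) (Fin k) F := fun i => fun t y => Q t (i, y) with hQi
  have hfac : ∀ i : Fin m, A = Pi i * Qi i := by
    intro i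
    ext x y
    have := congrFun (congrFun hB (i, x)) (i, y)
    simp [Matrix.kroneckerMap, Matrix.one_apply, Matrix.mul_apply] at this ⊢
    simpa using this
  have hP : spars P = ∑ i : Fin m, spars (Pi i) := by
    rw [spars_eq_sum]
    simp only [spars_eq_sum, hPi]
    rw [Fintype.sum_prod_type]
    refine Finset.sum_congr rfl fun i _ => ?_
    exact (spars_eq_sum (M := Pi i)).symm
  have hQ : spars Q = ∑ i : Fin m, spars (Qi i) := by
    simp only [spars_eq_sum, hQi, Fintype.sum_prod_type]
    rw [Finset.sum_comm]
    refine Finset.sum_congr rfl fun i _ => ?_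
    exact (spars_eq_sum (M := Qi i)).symm
  have : ∑ i : Fin m, s ≤ ∑ i : Fin m, (spars (Pi i) + spars (Qi i)) :=
    Finset.sum_le_sum fun i _ => hA r (Pi i) (Qi i) (hfac i)
  simpa [Finset.sum_add_distrib, hP, hQ, Finset.sum_const, mul_comm] using this
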